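/- Let V be a finite set of boxes with size function w : V → [0,1]^2 and let p, q ∈ (0,1/2]. Define I_1(p,q) = {b ∈ V : w_1(b) > 1−p and w_2(b) > 1−q}, I_2(p,q) = {b ∈ V \ I_1(p,q) : w_1(b) > 1/2 and w_2(b) > 1/2}, I_3(p,q) = {b ∈ V : p ≤ w_1(b) ≤ 1/2 and q ≤ w_2(b) ≤ 1/2}, and for b ∈ V set m(b,p,q) = ⌊1/p⌋·⌊(1−w_2(b))/q⌋ + ⌊1/q⌋·⌊(1−w_1(b))/p⌋ − ⌊(1−w_1(b))/p⌋·⌊(1−w_2(b))/q⌋. Further define L^(p,q)(V,w) = |I_1(p,q) ∪ I_2(p,q)| + ⌈(|I_3(p,q)| − ∑_{b∈I_2(p,q)} m(b,p,q)) / (⌊1/p⌋·⌊1/q⌋)⌉. Then, with w'^(p,q)(b) = (φ^(p)(w_1(b)), φ^(q)(w_2(b))), one has L^(p,q)(V,w) = ⌈∑_{b ∈ I_1(p,q) ∪ I_2(p,q) ∪ I_3(p,q)} φ^(p)(w_1(b))·φ^(q)(w_2(b))⌉. -/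

import Mathlib

/-- The dual feasible function `φ^(ε)`: `φ^(ε)(x) = 1 - ⌊(1-x)/ε⌋/⌊1/ε⌋` for `x > 1/2`,
`φ^(ε)(x) = 1/⌊1/ε⌋` for `ε ≤ x ≤ 1/2`, and `φ^(ε)(x) = 0` for `x < ε`. -/
noncomputable def phi (ε x : ℝ) : ℝ :=
  if 1 / 2 < x then 1 - (⌊(1 - x) / ε⌋ : ℝ) / (⌊1 / ε⌋ : ℝ)
  else if ε ≤ x then 1 / (⌊1 / ε⌋ : ℝ)
  else 0

/-- The Martello–Vigo two-dimensional bound `L^(p,q)` equals the ceiling of the total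
volume of the boxes in `I₁ ∪ I₂ ∪ I₃` with respect to the conservative scale
`w'^(p,q) = (φ^(p) ∘ w₁, φ^(q) ∘ w₂)`. -/
theorem martelloVigo_bound_eq {V : Type*} [Fintype V] [DecidableEq V]
    (w₁ w₂ : V → ℝ)
    (hw₁ : ∀ b, w₁ b ∈ Set.Icc (0 : ℝ) 1) (hw₂ : ∀ b, w₂ b ∈ Set.Icc (0 : ℝ) 1)
    (p q : ℝ) (hp : p ∈ Set.Ioc (0 : ℝ) (1 / 2)) (hq : q ∈ Set.Ioc (0 : ℝ) (1 / 2))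
    (I₁ I₂ I₃ : Finset V)
    (hI₁ : ∀ b, b ∈ I₁ ↔ 1 - p < w₁ b ∧ 1 - q < w₂ b)
    (hI₂ : ∀ b, b ∈ I₂ ↔ b ∉ I₁ ∧ 1 / 2 < w₁ b ∧ 1 / 2 < w₂ b)
    (hI₃ : ∀ b, b ∈ I₃ ↔ p ≤ w₁ b ∧ w₁ b ≤ 1 / 2 ∧ q ≤ w₂ b ∧ w₂ b ≤ 1 / 2) :
    ((I₁ ∪ I₂).card : ℤ) +
      ⌈((I₃.card : ℝ) -
          ∑ b ∈ I₂, ((⌊1 / p⌋ * ⌊(1 - w₂ b) / q⌋ + ⌊1 / q⌋ * ⌊(1 - w₁ b) / p⌋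
            - ⌊(1 - w₁ b) / p⌋ * ⌊(1 - w₂ b) / q⌋ : ℤ) : ℝ)) /
        ((⌊1 / p⌋ : ℝ) * (⌊1 / q⌋ : ℝ))⌉
    = ⌈∑ b ∈ I₁ ∪ I₂ ∪ I₃, phi p (w₁ b) * phi q (w₂ b)⌉ := by

  obtain ⟨hp0, hp2⟩ := hp
  obtain ⟨hq0, hq2⟩ := hq
  have hP : (1:ℤ) ≤ ⌊1/p⌋ := Int.le_floor.mpr (by
    rw [Int.cast_one, le_div_iff₀ hp0]; linarith)
  have hQ : (1:ℤ) ≤ ⌊1/q⌋ := Int.le_floor.mpr (by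
    rw [Int.cast_one, le_div_iff₀ hq0]; linarith)
  have hPR : (0:ℝ) < (⌊1/p⌋:ℝ) := by exact_mod_cast lt_of_lt_of_le zero_lt_one hP
  have hQR : (0:ℝ) < (⌊1/q⌋:ℝ) := by exact_mod_cast lt_of_lt_of_le zero_lt_one hQ
  have hd12 : Disjoint I₁ I₂ := by
    rw [Finset.disjoint_right]; intro b hb; exact ((hI₂ b).mp hb).1
  have hd3 : Disjoint (I₁ ∪ I₂) I₃ := by
    rw [Finset.disjoint_left]; intro b hb hb3
    obtain ⟨h1, h2, _, _⟩ := (hI₃ b).mp hb3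
    rcases Finset.mem_union.mp hb with h | h
    · have := ((hI₁ b).mp h).1; linarith
    · have := ((hI₂ b).mp h).2.1; linarith
  have floor0 : ∀ (ε x : ℝ), 0 < ε → x ≤ 1 → 1 - ε < x → ⌊(1 - x)/ε⌋ = 0 := by
    intro ε x hε hx1 hx2
    rw [Int.floor_eq_zero_iff, Set.mem_Ico]
    constructor
    · apply div_nonneg (by linarith) hε.le
    · rw [div_lt_one hε]; linarith
  have e1 : ∀ b ∈ I₁, phi p (w₁ b) * phi q (w₂ b) = 1 := by
    intro b hb
    obtain ⟨h1, h2⟩ := (hI₁ b).mp hb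
    have hw1 : phi p (w₁ b) = 1 := by
      unfold phi
      rw [if_pos (by linarith), floor0 p (w₁ b) hp0 (hw₁ b).2 h1]
      simp
    have hw2 : phi q (w₂ b) = 1 := by
      unfold phi
      rw [if_pos (by linarith), floor0 q (w₂ b) hq0 (hw₂ b).2 h2]
      simp
    rw [hw1, hw2, mul_one]
  have e2 : ∀ b ∈ I₂, phi p (w₁ b) * phi q (w₂ b) =
      1 - ((⌊1 / p⌋ * ⌊(1 - w₂ b) / q⌋ + ⌊1 / q⌋ * ⌊(1 - w₁ b) / p⌋
            - ⌊(1 - w₁ b) / p⌋ * ⌊(1 - w₂ b) / q⌋ : ℤ) : ℝ) /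
        ((⌊1/p⌋ : ℝ) * (⌊1/q⌋ : ℝ)) := by
    intro b hb
    obtain ⟨_, h1, h2⟩ := (hI₂ b).mp hb
    unfold phi
    rw [if_pos h1, if_pos h2]
    push_cast
    field_simp
    ring
  have e3 : ∀ b ∈ I₃, phi p (w₁ b) * phi q (w₂ b) =
      1 / ((⌊1/p⌋ : ℝ) * (⌊1/q⌋ : ℝ)) := by
    intro b hb
    obtain ⟨h1, h2, h3, h4⟩ := (hI₃ b).mp hb
    unfold phi
    rw [if_neg (by linarith), if_pos h1, if_neg (by linarith), if_pos h3]
    rw [div_mul_div_comm, one_mul]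
  rw [Finset.sum_union hd3, Finset.sum_union hd12,
    Finset.sum_congr rfl e1, Finset.sum_congr rfl e2, Finset.sum_congr rfl e3,
    Finset.sum_const, Finset.sum_const, Finset.sum_sub_distrib, Finset.sum_const,
    ← Finset.sum_div, Finset.card_union_of_disjoint hd12]
  set S : ℝ := ∑ b ∈ I₂, ((⌊1 / p⌋ * ⌊(1 - w₂ b) / q⌋ + ⌊1 / q⌋ * ⌊(1 - w₁ b) / p⌋
            - ⌊(1 - w₁ b) / p⌋ * ⌊(1 - w₂ b) / q⌋ : ℤ) : ℝ) with hS
  set D : ℝ := (⌊1/p⌋ : ℝ) * (⌊1/q⌋ : ℝ) with hD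
  have key : I₁.card • (1:ℝ) + (I₂.card • (1:ℝ) - S / D) + I₃.card • (1 / D)
      = ((I₃.card : ℝ) - S) / D + ((I₁.card + I₂.card : ℕ) : ℝ) := by
    simp only [nsmul_eq_mul, mul_one]
    push_cast
    ring
  rw [key, Int.ceil_add_natCast, add_comm]
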